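/- Suppose \mathbb{E}[\hat{\tau}(X)Y^0 | T=1] \leq \mathcal{V}^0 and \mathbb{E}[-\hat{\tau}(X)Y^1 | T=0] \leq \mathcal{V}^1, and let u_1 = P(T=1), u_0 = 1 - u_1. Then \mathbb{E}[(\hat{\tau}(X) - \tau_{true}(X))^2] \leq \mathbb{E}[\hat{\tau}(X)^2] + 2(u_0 \mathbb{E}[\hat{\tau}(X)Y^0 | T=0] + u_1 \mathbb{E}[-\hat{\tau}(X)Y^1 | T=1]) + 2(u_0 \mathcal{V}^1 + u_1 \mathcal{V}^0) + \zeta, where \zeta = \mathbb{E}[(\mu_1(X) - \mu_0(X))^2]. -/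
import Mathlib


open MeasureTheory ProbabilityTheory

/-- Distributionally robust upper bound on the PEHE: if
`E[τ̂(X)Y⁰ | T=1] ≤ 𝒱⁰` and `E[-τ̂(X)Y¹ | T=0] ≤ 𝒱¹`, with `u₁ = P(T=1)`, `u₀ = 1 - u₁`,
`τ_true = μ₁ - μ₀`, `μₜ(X) = E[Yᵗ | X]`, then
`E[(τ̂(X) - τ_true(X))²] ≤ E[τ̂(X)²] + 2(u₀ E[τ̂(X)Y⁰|T=0] + u₁ E[-τ̂(X)Y¹|T=1])
   + 2(u₀𝒱¹ + u₁𝒱⁰) + ζ` where `ζ = E[(μ₁(X)-μ₀(X))²]`. -/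
theorem drm_pehe_upper_bound {Ω α : Type*} [MeasurableSpace Ω] [mα : MeasurableSpace α]
    (μ : Measure Ω) [IsProbabilityMeasure μ]
    (X : Ω → α) (hX : Measurable X)
    (T : Ω → ℝ) (hT : Measurable T) (hTval : ∀ ω, T ω = 0 ∨ T ω = 1)
    (τ μ1 μ0 : α → ℝ) (hτ : Measurable τ) (hμ1 : Measurable μ1) (hμ0 : Measurable μ0)
    (Y1 Y0 : Ω → ℝ) (hY1 : Integrable Y1 μ) (hY0 : Integrable Y0 μ)
    (u1 u0 : ℝ) (hu1 : ENNReal.ofReal u1 = μ {ω | T ω = 1}) (hu0 : u0 = 1 - u1)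
    (hu1pos : 0 < u1) (hu1lt : u1 < 1)
    (hτ2 : Integrable (fun ω => (τ (X ω)) ^ 2) μ)
    (hζ : Integrable (fun ω => (μ1 (X ω) - μ0 (X ω)) ^ 2) μ)
    (hτμ1 : Integrable (fun ω => τ (X ω) * μ1 (X ω)) μ)
    (hτμ0 : Integrable (fun ω => τ (X ω) * μ0 (X ω)) μ)
    (hτY1 : Integrable (fun ω => τ (X ω) * Y1 ω) μ)
    (hτY0 : Integrable (fun ω => τ (X ω) * Y0 ω) μ)
    (hcond1 : μ[Y1 | mα.comap X] =ᵐ[μ] fun ω => μ1 (X ω))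
    (hcond0 : μ[Y0 | mα.comap X] =ᵐ[μ] fun ω => μ0 (X ω))
    (V0 V1 : ℝ)
    (hV0 : ∫ ω, τ (X ω) * Y0 ω ∂(μ[|{ω | T ω = 1}]) ≤ V0)
    (hV1 : ∫ ω, -(τ (X ω)) * Y1 ω ∂(μ[|{ω | T ω = 0}]) ≤ V1) :
    ∫ ω, (τ (X ω) - (μ1 (X ω) - μ0 (X ω))) ^ 2 ∂μ
      ≤ ∫ ω, (τ (X ω)) ^ 2 ∂μ
        + 2 * (u0 * ∫ ω, τ (X ω) * Y0 ω ∂(μ[|{ω | T ω = 0}])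
             + u1 * ∫ ω, -(τ (X ω)) * Y1 ω ∂(μ[|{ω | T ω = 1}]))
        + 2 * (u0 * V1 + u1 * V0)
        + ∫ ω, (μ1 (X ω) - μ0 (X ω)) ^ 2 ∂μ := by
  have hm : mα.comap X ≤ ‹MeasurableSpace Ω› := hX.comap_le
  haveI : SigmaFinite (μ.trim hm) := inferInstance
  have hu0pos : 0 < u0 := by rw [hu0]; linarith
  -- set s
  set s : Set Ω := {ω | T ω = 1} with hs_def
  have hs : MeasurableSet s := hT (measurableSet_singleton 1)
  have hcompl : {ω | T ω = 0} = sᶜ := by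
    ext ω
    rcases hTval ω with h | h <;> simp [hs_def, h]
  have hμs : μ s = ENNReal.ofReal u1 := hu1.symm
  have hμsc : μ sᶜ = ENNReal.ofReal u0 := by
    rw [prob_compl_eq_one_sub hs, hμs, hu0,
      ENNReal.ofReal_sub 1 hu1pos.le, ENNReal.ofReal_one]
  -- decomposition lemma
  have hdecomp : ∀ f : Ω → ℝ, Integrable f μ →
      ∫ ω, f ω ∂μ = u1 * ∫ ω, f ω ∂(μ[|s]) + u0 * ∫ ω, f ω ∂(μ[|sᶜ]) := by
    intro f hf
    have h1 : ∫ ω, f ω ∂(μ[|s]) = u1⁻¹ * ∫ ω, f ω ∂(μ.restrict s) := by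
      rw [ProbabilityTheory.cond, integral_smul_measure, hμs, ← ENNReal.ofReal_inv_of_pos hu1pos,
        ENNReal.toReal_ofReal (by positivity), smul_eq_mul]
    have h0 : ∫ ω, f ω ∂(μ[|sᶜ]) = u0⁻¹ * ∫ ω, f ω ∂(μ.restrict sᶜ) := by
      rw [ProbabilityTheory.cond, integral_smul_measure, hμsc, ← ENNReal.ofReal_inv_of_pos hu0pos,
        ENNReal.toReal_ofReal (by positivity), smul_eq_mul]
    rw [h1, h0, ← mul_assoc, ← mul_assoc, mul_inv_cancel₀ hu1pos.ne',
      mul_inv_cancel₀ hu0pos.ne', one_mul, one_mul, integral_add_compl hs hf]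
  -- conditional expectation identities
  have hsm : StronglyMeasurable[mα.comap X] (fun ω => τ (X ω)) :=
    (hτ.comp (Measurable.of_comap_le le_rfl)).stronglyMeasurable
  have key : ∀ (Y : Ω → ℝ) (ν : α → ℝ), Integrable Y μ →
      Integrable (fun ω => τ (X ω) * Y ω) μ →
      Integrable (fun ω => τ (X ω) * ν (X ω)) μ →
      (μ[Y | mα.comap X] =ᵐ[μ] fun ω => ν (X ω)) →
      ∫ ω, τ (X ω) * Y ω ∂μ = ∫ ω, τ (X ω) * ν (X ω) ∂μ := by
    intro Y ν hY hτY hτν hcond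
    have hmul := condExp_mul_of_stronglyMeasurable_left (m := mα.comap X) hsm hτY hY
    calc ∫ ω, τ (X ω) * Y ω ∂μ
        = ∫ ω, (μ[(fun ω => τ (X ω)) * Y | mα.comap X]) ω ∂μ :=
          (integral_condExp hm).symm
      _ = ∫ ω, τ (X ω) * ν (X ω) ∂μ := by
          refine integral_congr_ae (hmul.trans ?_)
          filter_upwards [hcond] with ω hω
          simp [Pi.mul_apply, hω]
  have key1 : ∫ ω, τ (X ω) * Y1 ω ∂μ = ∫ ω, τ (X ω) * μ1 (X ω) ∂μ :=
    key Y1 μ1 hY1 hτY1 hτμ1 hcond1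
  have key0 : ∫ ω, τ (X ω) * Y0 ω ∂μ = ∫ ω, τ (X ω) * μ0 (X ω) ∂μ :=
    key Y0 μ0 hY0 hτY0 hτμ0 hcond0
  -- expand the square
  have hexp : ∫ ω, (τ (X ω) - (μ1 (X ω) - μ0 (X ω))) ^ 2 ∂μ
      = ∫ ω, (τ (X ω)) ^ 2 ∂μ - 2 * ∫ ω, τ (X ω) * μ1 (X ω) ∂μ
        + 2 * ∫ ω, τ (X ω) * μ0 (X ω) ∂μ + ∫ ω, (μ1 (X ω) - μ0 (X ω)) ^ 2 ∂μ := by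
    have : (fun ω => (τ (X ω) - (μ1 (X ω) - μ0 (X ω))) ^ 2)
        = fun ω => (τ (X ω)) ^ 2 - 2 * (τ (X ω) * μ1 (X ω))
          + 2 * (τ (X ω) * μ0 (X ω)) + (μ1 (X ω) - μ0 (X ω)) ^ 2 := by
      funext ω; ring
    have hB : Integrable (fun ω => τ (X ω) ^ 2 - 2 * (τ (X ω) * μ1 (X ω))) μ :=
      hτ2.sub (hτμ1.const_mul 2)
    have hC : Integrable (fun ω => τ (X ω) ^ 2 - 2 * (τ (X ω) * μ1 (X ω))
        + 2 * (τ (X ω) * μ0 (X ω))) μ := hB.add (hτμ0.const_mul 2)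
    rw [this, integral_add hC hζ, integral_add hB (hτμ0.const_mul 2),
      integral_sub hτ2 (hτμ1.const_mul 2), integral_const_mul, integral_const_mul]
  -- decompose over T
  have hd0 := hdecomp _ hτY0
  have hd1 := hdecomp _ hτY1
  have hneg : ∀ ν : Measure Ω, ∫ ω, -(τ (X ω)) * Y1 ω ∂ν = -∫ ω, τ (X ω) * Y1 ω ∂ν := by
    intro ν; simp_rw [neg_mul]; exact integral_neg _
  rw [hcompl] at hV1
  rw [hneg] at hV1
  rw [hexp, hcompl, ← key1, ← key0, hd0, hd1, hneg]
  nlinarith [mul_nonneg hu1pos.le (sub_nonneg.2 hV0), mul_nonneg hu0pos.le (sub_nonneg.2 hV1)]
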